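/- arXiv:2003.13598 — 3 statements merged into one kernel-verified Lean document; each statement's English description precedes it below -/
import Mathlib

section
/- Let G be a connected bipartite graph with parts A and B such that every vertex in A has degree a ≥ 2 and every vertex in B has degree b with a ≤ b. Let e_1 = {u_1,v_1} and e_2 = {u_2,v_2} be edges with u_1,u_2 ∈ A, v_1,v_2 ∈ B. Suppose G − e_2 is connected and π is a graph isomorphism from G − e_1 to G − e_2. Then π maps the edge e_1 to the edge e_2, i.e., {π(u_1), π(v_1)} = {u_2, v_2}; in particular π is an automorphism of G mapping e_1 to e_2. -/
open MeasureTheory Finset Filter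
open scoped Classical

/-- Homomorphism density of a symmetric kernel `h` in a finite graph `G`:
`t_G(h) = ∫_{[0,1]^V} ∏_{{i,j} ∈ E(G)} h(x_i, x_j) dx`. -/
noncomputable def tG {V : Type} [Fintype V] (G : SimpleGraph V) (h : ℝ → ℝ → ℝ)
    (hsym : ∀ a b, h a b = h b a) : ℝ :=
  ∫ x : V → Set.Icc (0:ℝ) 1,
    ∏ e ∈ G.edgeFinset, Sym2.lift ⟨fun i j => h (x i) (x j), fun _ _ => hsym _ _⟩ e


lemma nbr_del {V : Type} [Fintype V] (G : SimpleGraph V) (u v w : V) (h : G.Adj u v) :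
    (G.deleteEdges {s(u,v)}).degree w =
      if w = u ∨ w = v then G.degree w - 1 else G.degree w := by
  classical
  have hne := h.ne
  have key : ∀ x : V, (G.deleteEdges {s(u,v)}).Adj w x ↔
      (G.Adj w x ∧ ¬((w = u ∧ x = v) ∨ (w = v ∧ x = u))) := by
    intro x
    rw [SimpleGraph.deleteEdges_adj, Set.mem_singleton_iff, Sym2.eq_iff]
  by_cases hw : w = u ∨ w = v
  · have herase : ∃ z, z ≠ w ∧ G.Adj w z ∧
        (G.deleteEdges {s(u,v)}).neighborFinset w = (G.neighborFinset w).erase z := by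
      rcases hw with rfl | rfl
      · refine ⟨v, fun hq => hne hq.symm, h, ?_⟩
        ext x
        rw [SimpleGraph.mem_neighborFinset, key, Finset.mem_erase,
          SimpleGraph.mem_neighborFinset]
        constructor
        · rintro ⟨ha, hn⟩
          exact ⟨fun hx => hn (Or.inl ⟨rfl, hx⟩), ha⟩
        · rintro ⟨hx, ha⟩
          refine ⟨ha, ?_⟩
          rintro (⟨_, hxe⟩ | ⟨hwe, _⟩)
          · exact hx hxe
          · exact hne hwe
      · refine ⟨u, fun hq => hne hq, h.symm, ?_⟩
        ext x
        rw [SimpleGraph.mem_neighborFinset, key, Finset.mem_erase,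
          SimpleGraph.mem_neighborFinset]
        constructor
        · rintro ⟨ha, hn⟩
          exact ⟨fun hx => hn (Or.inr ⟨rfl, hx⟩), ha⟩
        · rintro ⟨hx, ha⟩
          refine ⟨ha, ?_⟩
          rintro (⟨rfl, hxe⟩ | ⟨_, hxe⟩)
          · exact hne rfl
          · exact hx hxe
    obtain ⟨z, hzw, hadj, hE⟩ := herase
    rw [if_pos hw, ← SimpleGraph.card_neighborFinset_eq_degree,
      ← SimpleGraph.card_neighborFinset_eq_degree, hE,
      Finset.card_erase_of_mem ((SimpleGraph.mem_neighborFinset _ _ _).2 hadj)]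
  · push_neg at hw
    rw [if_neg (by push_neg; exact hw), ← SimpleGraph.card_neighborFinset_eq_degree,
      ← SimpleGraph.card_neighborFinset_eq_degree]
    congr 1
    ext x
    rw [SimpleGraph.mem_neighborFinset, key, SimpleGraph.mem_neighborFinset]
    constructor
    · exact fun h => h.1
    · intro ha
      exact ⟨ha, by rintro (⟨rfl, rfl⟩ | ⟨rfl, rfl⟩); exact hw.1 rfl; exact hw.2 rfl⟩

lemma iso_degree {V W : Type} [Fintype V] [Fintype W] {G : SimpleGraph V} {H : SimpleGraph W}
    (f : G ≃g H) (w : V) : H.degree (f w) = G.degree w := by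
  classical
  rw [← SimpleGraph.card_neighborFinset_eq_degree, ← SimpleGraph.card_neighborFinset_eq_degree]
  have : H.neighborFinset (f w) = (G.neighborFinset w).image f := by
    ext x
    simp only [SimpleGraph.mem_neighborFinset, Finset.mem_image]
    constructor
    · intro hx
      refine ⟨f.symm x, ?_, by simp⟩
      have : H.Adj (f w) (f (f.symm x)) := by simpa using hx
      exact f.map_adj_iff.1 this
    · rintro ⟨y, hy, rfl⟩
      exact f.map_adj_iff.2 hy
  rw [this]
  exact Finset.card_image_of_injective _ f.toEquiv.injective

/-- an isomorphism `G - e₁ ≃ G - e₂` must carry `e₁` to `e₂`, and hence is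
an automorphism of `G` mapping `e₁` to `e₂`. -/
theorem iso_of_deleted_maps_edge {V : Type} [Fintype V] (G : SimpleGraph V) (A B : Set V)
    (hcover : ∀ v, v ∈ A ∨ v ∈ B) (hdisj : ∀ v, ¬(v ∈ A ∧ v ∈ B))
    (hbip : ∀ u v, G.Adj u v → (u ∈ A ∧ v ∈ B) ∨ (u ∈ B ∧ v ∈ A))
    (a b : ℕ) (ha2 : 2 ≤ a) (hab : a ≤ b)
    (hdegA : ∀ u ∈ A, G.degree u = a) (hdegB : ∀ v ∈ B, G.degree v = b)
    (hconn : G.Connected)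
    (u₁ v₁ u₂ v₂ : V) (hu₁ : u₁ ∈ A) (hv₁ : v₁ ∈ B) (hu₂ : u₂ ∈ A) (hv₂ : v₂ ∈ B)
    (he₁ : G.Adj u₁ v₁) (he₂ : G.Adj u₂ v₂)
    (hconn₂ : (G.deleteEdges {s(u₂, v₂)}).Connected)
    (π : G.deleteEdges {s(u₁, v₁)} ≃g G.deleteEdges {s(u₂, v₂)}) :
    s(π u₁, π v₁) = s(u₂, v₂) ∧ ∀ x y, G.Adj x y ↔ G.Adj (π x) (π y) := by
  classical
  have hd1 : ∀ w, (G.deleteEdges {s(u₁, v₁)}).degree w = if w = u₁ ∨ w = v₁ then G.degree w - 1 else G.degree w :=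
    fun w => nbr_del G u₁ v₁ w he₁
  have hd2 : ∀ w, (G.deleteEdges {s(u₂, v₂)}).degree w = if w = u₂ ∨ w = v₂ then G.degree w - 1 else G.degree w :=
    fun w => nbr_del G u₂ v₂ w he₂
  have hπd : ∀ w, (G.deleteEdges {s(u₂, v₂)}).degree (π w) = (G.deleteEdges {s(u₁, v₁)}).degree w := fun w => by convert iso_degree π w
  -- degree of vertices of G₂
  have hd2A : ∀ w ∈ A, w ≠ u₂ → (G.deleteEdges {s(u₂, v₂)}).degree w = a := by
    intro w hw hwne
    rw [hd2, if_neg, hdegA w hw]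
    rintro (rfl | rfl)
    · exact hwne rfl
    · exact hdisj w ⟨hw, hv₂⟩
  have hd2B : ∀ w ∈ B, w ≠ v₂ → (G.deleteEdges {s(u₂, v₂)}).degree w = b := by
    intro w hw hwne
    rw [hd2, if_neg, hdegB w hw]
    rintro (rfl | rfl)
    · exact hdisj w ⟨hu₂, hw⟩
    · exact hwne rfl
  have hd2u : (G.deleteEdges {s(u₂, v₂)}).degree u₂ = a - 1 := by rw [hd2, if_pos (Or.inl rfl), hdegA u₂ hu₂]
  have hd2v : (G.deleteEdges {s(u₂, v₂)}).degree v₂ = b - 1 := by rw [hd2, if_pos (Or.inr rfl), hdegB v₂ hv₂]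
  have hp : (G.deleteEdges {s(u₂, v₂)}).degree (π u₁) = a - 1 := by
    rw [hπd, hd1, if_pos (Or.inl rfl), hdegA u₁ hu₁]
  have hq : (G.deleteEdges {s(u₂, v₂)}).degree (π v₁) = b - 1 := by
    rw [hπd, hd1, if_pos (Or.inr rfl), hdegB v₁ hv₁]
  have hne12 : u₁ ≠ v₁ := he₁.ne
  have hπne : (π u₁ : V) ≠ π v₁ := fun h => hne12 (π.injective h)
  -- classify π u₁
  have hcaseu : π u₁ = u₂ ∨ ((π u₁ : V) = v₂ ∧ a = b) := by
    rcases hcover (π u₁) with hpA | hpB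
    · left
      by_contra hne
      have := hd2A _ hpA hne
      rw [hp] at this
      omega
    · right
      by_cases hpe : (π u₁ : V) = v₂
      · refine ⟨hpe, ?_⟩
        rw [hpe, hd2v] at hp
        omega
      · exfalso
        have := hd2B _ hpB hpe
        rw [hp] at this
        omega
  have hkey : s(π u₁, π v₁) = s(u₂, v₂) := by
    rcases hcaseu with hpu | ⟨hpv, hab'⟩
    · -- π u₁ = u₂; classify π v₁
      rcases hcover (π v₁) with hqA | hqB
      · -- bad case: π v₁ ∈ A, forces b - 1 = a and contradiction
        exfalso
        have hqne : (π v₁ : V) ≠ u₂ := fun h => hπne (hpu.trans h.symm)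
        have hba : b - 1 = a := by
          have := hd2A _ hqA hqne
          rw [hq] at this
          exact this
        have hblt : a < b := by omega
        -- all G₁-neighbors of v₁ map to v₂
        have hmain : ∀ x, (G.deleteEdges {s(u₁, v₁)}).Adj v₁ x → π x = v₂ := by
          intro x hadj1
          have hGadj : G.Adj v₁ x ∧ s(v₁, x) ∉ ({s(u₁, v₁)} : Set (Sym2 V)) := by
            rwa [SimpleGraph.deleteEdges_adj] at hadj1
          have hxA : x ∈ A := by
            rcases hbip _ _ hGadj.1 with ⟨h1, _⟩ | ⟨_, h2⟩
            · exact absurd ⟨h1, hv₁⟩ (hdisj v₁)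
            · exact h2
          have hxu : x ≠ u₁ := by
            rintro rfl
            exact hGadj.2 (by rw [Set.mem_singleton_iff, Sym2.eq_swap])
          have hxv : x ≠ v₁ := hGadj.1.ne'
          have hdx : (G.deleteEdges {s(u₁, v₁)}).degree x = a := by
            rw [hd1, if_neg (by rintro (rfl | rfl); exact hxu rfl; exact hxv rfl),
              hdegA x hxA]
          have hdpx : (G.deleteEdges {s(u₂, v₂)}).degree (π x) = a := by rw [hπd, hdx]
          have hadj2 : (G.deleteEdges {s(u₂, v₂)}).Adj (π v₁) (π x) := π.map_adj_iff.2 hadj1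
          have hGadj2 : G.Adj (π v₁) (π x) := by
            rw [SimpleGraph.deleteEdges_adj] at hadj2
            exact hadj2.1
          have hπxB : (π x : V) ∈ B := by
            rcases hbip _ _ hGadj2 with ⟨_, h2⟩ | ⟨h1, _⟩
            · exact h2
            · exact absurd ⟨hqA, h1⟩ (hdisj _)
          by_contra hne
          have := hd2B _ hπxB hne
          rw [hdpx] at this
          omega
        -- v₁ has ≥ 2 neighbors in G₁
        have hcard : 1 < ((G.deleteEdges {s(u₁, v₁)}).neighborFinset v₁).card := by
          rw [SimpleGraph.card_neighborFinset_eq_degree, hd1, if_pos (Or.inr rfl),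
            hdegB v₁ hv₁]
          omega
        obtain ⟨x, hx, y, hy, hxy⟩ := Finset.one_lt_card.1 hcard
        have hxv2 := hmain x ((SimpleGraph.mem_neighborFinset _ _ _).1 hx)
        have hyv2 := hmain y ((SimpleGraph.mem_neighborFinset _ _ _).1 hy)
        exact hxy (π.injective (by rw [hxv2, hyv2]))
      · -- π v₁ ∈ B
        have hqv : π v₁ = v₂ := by
          by_contra hne
          have := hd2B _ hqB hne
          rw [hq] at this
          omega
        rw [hpu, hqv]
    · -- a = b, π u₁ = v₂; then π v₁ = u₂
      have hqne : (π v₁ : V) ≠ v₂ := fun h => hπne (hpv.trans h.symm)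
      have hqu : π v₁ = u₂ := by
        rcases hcover (π v₁) with hqA | hqB
        · by_contra hne
          have := hd2A _ hqA hne
          rw [hq] at this
          omega
        · exfalso
          have := hd2B _ hqB hqne
          rw [hq] at this
          omega
      rw [hpv, hqu, Sym2.eq_swap]
  refine ⟨hkey, fun x y => ?_⟩
  constructor
  · intro hxy
    by_cases hE : s(x, y) = s(u₁, v₁)
    · have h2 : s(π x, π y) = s(u₂, v₂) := by
        rcases Sym2.eq_iff.1 hE with ⟨rfl, rfl⟩ | ⟨rfl, rfl⟩
        · exact hkey
        · rw [Sym2.eq_swap]; exact hkey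
      rcases Sym2.eq_iff.1 h2 with ⟨h3, h4⟩ | ⟨h3, h4⟩
      · rw [h3, h4]; exact he₂
      · rw [h3, h4]; exact he₂.symm
    · have h1 : (G.deleteEdges {s(u₁, v₁)}).Adj x y := by
        rw [SimpleGraph.deleteEdges_adj]
        exact ⟨hxy, by simpa using hE⟩
      have h2 : (G.deleteEdges {s(u₂, v₂)}).Adj (π x) (π y) := π.map_adj_iff.2 h1
      rw [SimpleGraph.deleteEdges_adj] at h2
      exact h2.1
  · intro hxy
    by_cases hE : s(π x, π y) = s(u₂, v₂)
    · have hE' : s(π x, π y) = s(π u₁, π v₁) := hE.trans hkey.symm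
      rcases Sym2.eq_iff.1 hE' with ⟨h3, h4⟩ | ⟨h3, h4⟩
      · rw [π.injective h3, π.injective h4]; exact he₁
      · rw [π.injective h3, π.injective h4]; exact he₁.symm
    · have h2 : (G.deleteEdges {s(u₂, v₂)}).Adj (π x) (π y) := by
        rw [SimpleGraph.deleteEdges_adj]
        exact ⟨hxy, by simpa using hE⟩
      have h1 : (G.deleteEdges {s(u₁, v₁)}).Adj x y := π.map_adj_iff.1 h2
      rw [SimpleGraph.deleteEdges_adj] at h1
      exact h1.1
end

section
/- Suppose G is a finite graph with edges e_1,...,e_k such that the Cauchy–Schwarz-type inequality t_G(h_1,...,h_k)^k ≤ ∏_{l=1}^k t_G(h_l) holds for all bounded measurable symmetric nonnegative h_1,...,h_k on [0,1]^2. Then for every bounded measurable symmetric nonnegative h separated from zero (h ≥ δ > 0 everywhere) and every pair of edges e_1, e_2, one has t_{G−e_1}(h) = t_{G−e_2}(h). -/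
open MeasureTheory Finset Filter
open scoped Classical

/-- Multilinear homomorphism density: edge `e` carries the symmetric kernel `H e`. -/
noncomputable def tGm {V : Type} [Fintype V] (G : SimpleGraph V) (H : Sym2 V → ℝ → ℝ → ℝ)
    (hsym : ∀ e a b, H e a b = H e b a) : ℝ :=
  ∫ x : V → Set.Icc (0:ℝ) 1,
    ∏ e ∈ G.edgeFinset, Sym2.lift ⟨fun i j => H e (x i) (x j), fun _ _ => hsym e _ _⟩ e


noncomputable def FF {V : Type} [Fintype V] (h : ℝ → ℝ → ℝ) (hsym : ∀ a b, h a b = h b a)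
    (e : Sym2 V) (x : V → Set.Icc (0:ℝ) 1) : ℝ :=
  Sym2.lift ⟨fun i j => h (x i) (x j), fun _ _ => hsym _ _⟩ e

noncomputable def WInt {V : Type} [Fintype V] (h : ℝ → ℝ → ℝ) (hsym : ∀ a b, h a b = h b a)
    (S : Finset (Sym2 V)) : ℝ :=
  ∫ x : V → Set.Icc (0:ℝ) 1, ∏ e ∈ S, FF h hsym e x

@[simp] lemma FF_mk {V : Type} [Fintype V] {h : ℝ → ℝ → ℝ} {hsym : ∀ a b, h a b = h b a}
    (i j : V) (x : V → Set.Icc (0:ℝ) 1) : FF h hsym s(i, j) x = h (x i) (x j) := rfl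

section
variable {V : Type} [Fintype V] {h : ℝ → ℝ → ℝ} {hsym : ∀ a b, h a b = h b a}
  {M δ : ℝ}

lemma measurable_FF (hmeas : Measurable (Function.uncurry h)) (e : Sym2 V) :
    Measurable (FF (V := V) h hsym e) := by
  induction e using Sym2.ind with
  | _ i j =>
    have : Measurable fun x : V → Set.Icc (0:ℝ) 1 => Function.uncurry h ((x i : ℝ), (x j : ℝ)) :=
      hmeas.comp ((measurable_subtype_coe.comp (measurable_pi_apply i)).prodMk
        (measurable_subtype_coe.comp (measurable_pi_apply j)))
    exact this

lemma le_FF (hsep : ∀ x y, δ ≤ h x y) (e : Sym2 V) (x : V → Set.Icc (0:ℝ) 1) :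
    δ ≤ FF h hsym e x := by
  induction e using Sym2.ind with
  | _ i j => simpa using hsep (x i) (x j)

lemma abs_FF_le (hM : ∀ x y, |h x y| ≤ M) (e : Sym2 V) (x : V → Set.Icc (0:ℝ) 1) :
    |FF h hsym e x| ≤ M := by
  induction e using Sym2.ind with
  | _ i j => simpa using hM (x i) (x j)

lemma integrable_prodFF (hmeas : Measurable (Function.uncurry h))
    (hM : ∀ x y, |h x y| ≤ M) (S : Finset (Sym2 V)) :
    Integrable (fun x : V → Set.Icc (0:ℝ) 1 => ∏ e ∈ S, FF h hsym e x) := by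
  have hmul : Measurable (fun x : V → Set.Icc (0:ℝ) 1 => ∏ e ∈ S, FF h hsym e x) :=
    Finset.measurable_prod S fun e _ => measurable_FF hmeas e
  refine ⟨hmul.aestronglyMeasurable, ?_⟩
  refine HasFiniteIntegral.of_bounded (C := (|M|) ^ S.card) (Filter.Eventually.of_forall ?_)
  intro x
  rw [Real.norm_eq_abs, Finset.abs_prod]
  calc ∏ e ∈ S, |FF h hsym e x| ≤ ∏ e ∈ S, |M| :=
        Finset.prod_le_prod (fun _ _ => abs_nonneg _)
          (fun e _ => (abs_FF_le hM e x).trans (le_abs_self M))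
    _ = |M| ^ S.card := by rw [Finset.prod_const]

lemma WInt_nonneg (hδ : 0 < δ) (hsep : ∀ x y, δ ≤ h x y) (S : Finset (Sym2 V)) :
    0 ≤ WInt h hsym S :=
  integral_nonneg fun x => Finset.prod_nonneg fun e _ => hδ.le.trans (le_FF hsep e x)

lemma pow_le_WInt (hδ : 0 < δ) (hsep : ∀ x y, δ ≤ h x y)
    (hmeas : Measurable (Function.uncurry h)) (hM : ∀ x y, |h x y| ≤ M)
    (S : Finset (Sym2 V)) : δ ^ S.card ≤ WInt h hsym S := by
  have : δ ^ S.card = ∫ _x : V → Set.Icc (0:ℝ) 1, δ ^ S.card := by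
    simp [integral_const]
  rw [this]
  refine integral_mono (integrable_const _) (integrable_prodFF hmeas hM S) ?_
  intro x
  calc δ ^ S.card = ∏ _e ∈ S, δ := by rw [Finset.prod_const]
    _ ≤ ∏ e ∈ S, FF h hsym e x :=
        Finset.prod_le_prod (fun _ _ => hδ.le) (fun e _ => le_FF hsep e x)

end

lemma tG_congr {V : Type} [Fintype V] (G : SimpleGraph V) (h₁ h₂ : ℝ → ℝ → ℝ)
    (p₁ : ∀ a b, h₁ a b = h₁ b a) (p₂ : ∀ a b, h₂ a b = h₂ b a) (hh : h₁ = h₂) :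
    tG G h₁ p₁ = tG G h₂ p₂ := by subst hh; rfl

lemma sym2lift_congr {α β : Type} (f₁ f₂ : α → α → β) (hf : f₁ = f₂)
    (p₁ : ∀ i j, f₁ i j = f₁ j i) (p₂ : ∀ i j, f₂ i j = f₂ j i) (e : Sym2 α) :
    Sym2.lift ⟨f₁, p₁⟩ e = Sym2.lift ⟨f₂, p₂⟩ e := by subst hf; rfl


lemma combine_step (k : ℕ) (A B Pt Sig CC C2 t : ℝ) (hAp : 0 ≤ A ^ (k-1))
    (h1 : (A + t*B)^k ≤ Pt * A^(k-1))
    (h2 : |Pt - (A + t * Sig)| ≤ CC * t^2)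
    (h3 : A^k + t*B*A^(k-1)*(k:ℝ) - C2*t^2 ≤ (A+t*B)^k)
    (hAk : A^k = A^(k-1)*A) :
    t * (((k:ℝ)*B - Sig) * A^(k-1)) ≤ (C2 + CC*A^(k-1))*t^2 := by
  have h2' : Pt ≤ A + t*Sig + CC*t^2 := by have := (abs_le.mp h2).2; linarith
  have h4 : Pt * A^(k-1) ≤ (A + t*Sig + CC*t^2) * A^(k-1) := mul_le_mul_of_nonneg_right h2' hAp
  nlinarith [h1, h3, h4]


lemma polybound {α : Type} [DecidableEq α] (E : Finset α) (W : Finset α → ℝ)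
    (hW : ∀ S, 0 ≤ W S) (t : ℝ) (ht : |t| ≤ 1) :
    |(∑ S ∈ E.powerset, W S * t ^ (E \ S).card) -
      (W E + t * ∑ f ∈ E, W (E.erase f))| ≤ (∑ S ∈ E.powerset, W S) * t ^ 2 := by
  set g : Finset α → ℝ := fun S => W S * t ^ (E \ S).card with hg
  set D : Finset (Finset α) := E.image (fun f => E.erase f) with hD
  have hDsub : D ⊆ E.powerset.erase E := by
    intro S hS
    obtain ⟨f, hf, rfl⟩ := Finset.mem_image.mp hS
    refine Finset.mem_erase.2 ⟨fun hEq => (Finset.erase_eq_self.mp hEq) hf, ?_⟩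
    exact Finset.mem_powerset.2 (Finset.erase_subset _ _)
  have hEp : E ∈ E.powerset := Finset.mem_powerset_self E
  have split1 : ∑ S ∈ E.powerset, g S = g E + ∑ S ∈ E.powerset.erase E, g S :=
    (Finset.add_sum_erase _ g hEp).symm
  have split2 : ∑ S ∈ E.powerset.erase E, g S
      = ∑ S ∈ (E.powerset.erase E) \ D, g S + ∑ S ∈ D, g S :=
    (Finset.sum_sdiff hDsub).symm
  have hgE : g E = W E := by simp [hg]
  have hDsum : ∑ S ∈ D, g S = t * ∑ f ∈ E, W (E.erase f) := by
    rw [hD, Finset.sum_image (fun f hf f' hf' hEq => Finset.erase_injOn E hf hf' hEq)]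
    rw [Finset.mul_sum]
    refine Finset.sum_congr rfl fun f hf => ?_
    have h1 : E \ E.erase f = {f} := by
      rw [Finset.erase_eq]
      exact Finset.sdiff_sdiff_eq_self (Finset.singleton_subset_iff.2 hf)
    rw [hg]; simp only []
    rw [h1]
    simp [mul_comm]
  have hrest : ∀ S ∈ (E.powerset.erase E) \ D, |g S| ≤ W S * t ^ 2 := by
    intro S hS
    have hS1 := Finset.mem_sdiff.mp hS
    have hS3 : S ∉ D := hS1.2
    have hS2 : S ⊆ E := Finset.mem_powerset.mp (Finset.mem_erase.mp hS1.1).2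
    have hSne : S ≠ E := (Finset.mem_erase.mp hS1.1).1
    have hcard : 2 ≤ (E \ S).card := by
      have h0 : (E \ S).card ≠ 0 := by
        intro h0
        exact hSne (Finset.Subset.antisymm hS2
          (Finset.sdiff_eq_empty_iff_subset.mp (Finset.card_eq_zero.mp h0)))
      have h1 : (E \ S).card ≠ 1 := by
        intro h1
        obtain ⟨f, hf⟩ := Finset.card_eq_one.mp h1
        have hfE : f ∈ E := by
          have : f ∈ E \ S := hf ▸ Finset.mem_singleton_self f
          exact (Finset.mem_sdiff.mp this).1
        have hSeq : S = E.erase f := by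
          have h2 : E \ (E \ S) = S := Finset.sdiff_sdiff_eq_self hS2
          rw [hf] at h2
          rw [← h2, Finset.erase_eq]
        exact hS3 (Finset.mem_image.mpr ⟨f, hfE, hSeq.symm⟩)
      omega
    have habs : |g S| = W S * |t| ^ (E \ S).card := by
      rw [hg]; simp only []
      rw [abs_mul, abs_of_nonneg (hW S), abs_pow]
    rw [habs]
    have : |t| ^ (E \ S).card ≤ |t| ^ 2 :=
      pow_le_pow_of_le_one (abs_nonneg t) ht hcard
    calc W S * |t| ^ (E \ S).card ≤ W S * |t| ^ 2 :=
          mul_le_mul_of_nonneg_left this (hW S)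
      _ = W S * t ^ 2 := by rw [sq_abs]
  calc |(∑ S ∈ E.powerset, g S) - (W E + t * ∑ f ∈ E, W (E.erase f))|
      = |∑ S ∈ (E.powerset.erase E) \ D, g S| := by
        rw [split1, split2, hgE, hDsum]; ring_nf
    _ ≤ ∑ S ∈ (E.powerset.erase E) \ D, |g S| := Finset.abs_sum_le_sum_abs _ _
    _ ≤ ∑ S ∈ (E.powerset.erase E) \ D, W S * t ^ 2 := Finset.sum_le_sum hrest
    _ = (∑ S ∈ (E.powerset.erase E) \ D, W S) * t ^ 2 := by rw [← Finset.sum_mul]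
    _ ≤ (∑ S ∈ E.powerset, W S) * t ^ 2 := by
        refine mul_le_mul_of_nonneg_right ?_ (sq_nonneg t)
        refine Finset.sum_le_sum_of_subset_of_nonneg ?_ (fun S _ _ => hW S)
        exact (Finset.sdiff_subset).trans (Finset.erase_subset _ _)

lemma binom_lower (A B : ℝ) (hA : 0 ≤ A) (hB : 0 ≤ B) (k : ℕ) (hk : 1 ≤ k)
    (t : ℝ) (ht : |t| ≤ 1) :
    A ^ k + t * B * A ^ (k - 1) * k
      - (∑ m ∈ Finset.range (k + 1), (k.choose m : ℝ) * B ^ m * A ^ (k - m)) * t ^ 2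
      ≤ (A + t * B) ^ k := by
  have hexp : (A + t * B) ^ k
      = ∑ m ∈ Finset.range (k + 1), (t * B) ^ m * A ^ (k - m) * (k.choose m : ℝ) := by
    rw [add_comm A (t * B)]
    exact add_pow (t * B) A k
  set f : ℕ → ℝ := fun m => (t * B) ^ m * A ^ (k - m) * (k.choose m : ℝ) with hf
  have hsplit : ∑ m ∈ Finset.range (k + 1), f m
      = (f 0 + f 1) + ∑ m ∈ Finset.Ico 2 (k + 1), f m := by
    rw [Finset.range_eq_Ico, ← Finset.sum_Ico_consecutive f (by omega : 0 ≤ 2) (by omega : 2 ≤ k + 1)]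
    congr 1
    rw [← Finset.range_eq_Ico]
    simp [Finset.sum_range_succ]
  have hf0 : f 0 = A ^ k := by simp [hf]
  have hf1 : f 1 = t * B * A ^ (k - 1) * k := by simp [hf]
  have hrem : -((∑ m ∈ Finset.range (k + 1), (k.choose m : ℝ) * B ^ m * A ^ (k - m)) * t ^ 2)
      ≤ ∑ m ∈ Finset.Ico 2 (k + 1), f m := by
    have h1 : ∀ m ∈ Finset.Ico 2 (k + 1),
        -(((k.choose m : ℝ) * B ^ m * A ^ (k - m)) * t ^ 2) ≤ f m := by
      intro m hm
      have hm2 : 2 ≤ m := (Finset.mem_Ico.mp hm).1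
      have habs : |f m| ≤ ((k.choose m : ℝ) * B ^ m * A ^ (k - m)) * t ^ 2 := by
        rw [hf]; simp only []
        rw [abs_mul, abs_mul, mul_pow, abs_mul, abs_pow, abs_pow,
          abs_of_nonneg hB, abs_of_nonneg (pow_nonneg hA _),
          abs_of_nonneg (by positivity : (0:ℝ) ≤ (k.choose m : ℝ))]
        have : |t| ^ m ≤ t ^ 2 := by
          rw [← sq_abs]
          exact pow_le_pow_of_le_one (abs_nonneg t) ht hm2
        calc |t| ^ m * B ^ m * A ^ (k - m) * (k.choose m : ℝ)
            ≤ t ^ 2 * B ^ m * A ^ (k - m) * (k.choose m : ℝ) := by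
              have hBm : (0:ℝ) ≤ B ^ m := pow_nonneg hB m
              have hAm : (0:ℝ) ≤ A ^ (k - m) := pow_nonneg hA _
              have hch : (0:ℝ) ≤ (k.choose m : ℝ) := by positivity
              exact mul_le_mul_of_nonneg_right (mul_le_mul_of_nonneg_right
                (mul_le_mul_of_nonneg_right this hBm) hAm) hch
          _ = (k.choose m : ℝ) * B ^ m * A ^ (k - m) * t ^ 2 := by ring
      linarith [neg_abs_le (f m)]
    calc -((∑ m ∈ Finset.range (k + 1), (k.choose m : ℝ) * B ^ m * A ^ (k - m)) * t ^ 2)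
        ≤ -((∑ m ∈ Finset.Ico 2 (k + 1), (k.choose m : ℝ) * B ^ m * A ^ (k - m)) * t ^ 2) := by
          rw [neg_le_neg_iff]
          refine mul_le_mul_of_nonneg_right ?_ (sq_nonneg t)
          refine Finset.sum_le_sum_of_subset_of_nonneg ?_ (fun m _ _ => by positivity)
          intro m hm
          rw [Finset.mem_Ico] at hm
          rw [Finset.mem_range]
          omega
      _ = ∑ m ∈ Finset.Ico 2 (k + 1), -(((k.choose m : ℝ) * B ^ m * A ^ (k - m)) * t ^ 2) := by
          rw [Finset.sum_mul, ← Finset.sum_neg_distrib]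
      _ ≤ ∑ m ∈ Finset.Ico 2 (k + 1), f m := Finset.sum_le_sum h1
  rw [hexp, hsplit, hf0, hf1]
  linarith

lemma zero_of_small (c D d : ℝ) (hd : 0 < d) (hD : 0 ≤ D)
    (H : ∀ t : ℝ, |t| ≤ d → t * c ≤ D * t ^ 2) : c = 0 := by
  by_contra hc
  have hc' : 0 < |c| := abs_pos.mpr hc
  set ε := min d (|c| / (2 * (D + 1))) with hε
  have hε0 : 0 < ε := lt_min hd (by positivity)
  have hεd : ε ≤ d := min_le_left _ _
  have h1 := H ε (by rw [abs_of_pos hε0]; exact hεd)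
  have h2 := H (-ε) (by rw [abs_neg, abs_of_pos hε0]; exact hεd)
  have h3 : ε ≤ |c| / (2 * (D + 1)) := min_le_right _ _
  have h4 : ε * (2 * (D + 1)) ≤ |c| := by
    rw [← le_div_iff₀ (by positivity)]; exact h3
  rcases lt_or_gt_of_ne hc with hneg | hpos
  · rw [abs_of_neg hneg] at h4
    nlinarith
  · rw [abs_of_pos hpos] at h4
    nlinarith

section
variable {V : Type} [Fintype V] {h : ℝ → ℝ → ℝ} {hsym : ∀ a b, h a b = h b a} {M δ : ℝ}

lemma main_ineq (G : SimpleGraph V)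
    (hwn : ∀ (H : Sym2 V → ℝ → ℝ → ℝ) (hs : ∀ e a b, H e a b = H e b a),
      (∀ e, Measurable (Function.uncurry (H e))) → (∀ e, ∃ M, ∀ x y, |H e x y| ≤ M) →
      (∀ e x y, 0 ≤ H e x y) →
      tGm G H hs ^ G.edgeFinset.card ≤ ∏ e ∈ G.edgeFinset, tG G (H e) (hs e))
    (hmeas : Measurable (Function.uncurry h)) (hM : ∀ x y, |h x y| ≤ M)
    (hδ : 0 < δ) (hsep : ∀ x y, δ ≤ h x y)
    (e : Sym2 V) (he : e ∈ G.edgeFinset) (t : ℝ) (htδ : -δ ≤ t) :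
    (WInt h hsym G.edgeFinset + t * WInt h hsym (G.edgeFinset.erase e)) ^ G.edgeFinset.card ≤
      (∑ S ∈ G.edgeFinset.powerset, WInt h hsym S * t ^ (G.edgeFinset \ S).card) *
        WInt h hsym G.edgeFinset ^ (G.edgeFinset.card - 1) := by
  set ht' : ℝ → ℝ → ℝ := fun a b => h a b + t with hht'
  have hts : ∀ a b, ht' a b = ht' b a := fun a b => by simp [hht', hsym a b]
  set H : Sym2 V → ℝ → ℝ → ℝ := fun f => if f = e then ht' else h with hH
  have hHe : H e = ht' := by simp [hH]
  have hHne : ∀ f, f ≠ e → H f = h := fun f hf => by simp [hH, hf]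
  have hs : ∀ f a b, H f a b = H f b a := by
    intro f a b
    by_cases hf : f = e
    · subst hf; rw [hHe]; exact hts a b
    · rw [hHne f hf]; exact hsym a b
  have hsm : ∀ f, Measurable (Function.uncurry (H f)) := by
    intro f
    by_cases hf : f = e
    · subst hf; rw [hHe]; exact hmeas.add_const t
    · rw [hHne f hf]; exact hmeas
  have hbd : ∀ f, ∃ Mf, ∀ x y, |H f x y| ≤ Mf := by
    intro f
    by_cases hf : f = e
    · subst hf; rw [hHe]
      exact ⟨M + |t|, fun x y => (abs_add_le _ _).trans (add_le_add_left (hM x y) _)⟩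
    · rw [hHne f hf]; exact ⟨M, hM⟩
  have hnn : ∀ f x y, 0 ≤ H f x y := by
    intro f x y
    by_cases hf : f = e
    · subst hf; rw [hHe]
      have := hsep x y
      simp only [hht']
      linarith
    · rw [hHne f hf]; exact hδ.le.trans (hsep x y)
  have hineq := hwn H hs hsm hbd hnn
  -- pointwise description of the integrand of tGm
  have hFFif : ∀ (f : Sym2 V) (x : V → Set.Icc (0:ℝ) 1),
      Sym2.lift ⟨fun i j => H f (x i) (x j), fun _ _ => hs f _ _⟩ f
        = (if f = e then FF h hsym f x + t else FF h hsym f x) := by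
    intro f x
    by_cases hf : f = e
    · rw [if_pos hf]
      have h1 : (fun i j : V => H f ((x i : ℝ)) ((x j : ℝ)))
          = (fun i j : V => h (x i) (x j) + t) := by
        funext i j; rw [hf, hHe]
      refine (sym2lift_congr _ _ h1 _ (fun i j => by rw [hsym]) f).trans ?_
      induction f using Sym2.ind with
      | _ i j => rfl
    · rw [if_neg hf]
      have h1 : (fun i j : V => H f ((x i : ℝ)) ((x j : ℝ)))
          = (fun i j : V => h (x i) (x j)) := by
        funext i j; rw [hHne f hf]
      exact sym2lift_congr _ _ h1 _ (fun i j => by rw [hsym]) f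
  -- LHS computation
  have hstep1 : tGm G H hs
      = WInt h hsym G.edgeFinset + t * WInt h hsym (G.edgeFinset.erase e) := by
    have e1 : tGm G H hs = ∫ x : V → Set.Icc (0:ℝ) 1,
        ∏ f ∈ G.edgeFinset, Sym2.lift ⟨fun i j => H f (x i) (x j), fun _ _ => hs f _ _⟩ f := rfl
    have e2 : ∀ x : V → Set.Icc (0:ℝ) 1,
        ∏ f ∈ G.edgeFinset, Sym2.lift ⟨fun i j => H f (x i) (x j), fun _ _ => hs f _ _⟩ f
          = (∏ f ∈ G.edgeFinset, FF h hsym f x)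
            + t * ∏ f ∈ G.edgeFinset.erase e, FF h hsym f x := by
      intro x
      rw [Finset.prod_congr rfl (fun f _ => hFFif f x),
        ← Finset.mul_prod_erase G.edgeFinset _ he, if_pos rfl,
        Finset.prod_congr rfl
          (fun f hf => if_neg (Finset.mem_erase.mp hf).1 :
            ∀ f ∈ G.edgeFinset.erase e,
              (if f = e then FF h hsym f x + t else FF h hsym f x) = FF h hsym f x),
        ← Finset.mul_prod_erase G.edgeFinset (fun f => FF h hsym f x) he]
      ring
    rw [e1]
    simp only [e2]
    rw [integral_add (integrable_prodFF hmeas hM G.edgeFinset)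
      ((integrable_prodFF hmeas hM (G.edgeFinset.erase e)).const_mul t),
      integral_const_mul]
    rfl
  -- RHS computation
  have hstep2a : ∀ f ∈ G.edgeFinset.erase e,
      tG G (H f) (hs f) = WInt h hsym G.edgeFinset := by
    intro f hf
    exact tG_congr G (H f) h (hs f) hsym (hHne f (Finset.mem_erase.mp hf).1)
  have hstep2b : tG G (H e) (hs e)
      = ∑ S ∈ G.edgeFinset.powerset, WInt h hsym S * t ^ (G.edgeFinset \ S).card := by
    rw [tG_congr G (H e) ht' (hs e) hts hHe]
    have e1 : tG G ht' hts = ∫ x : V → Set.Icc (0:ℝ) 1,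
        ∏ f ∈ G.edgeFinset, FF ht' hts f x := rfl
    have e2 : ∀ (f : Sym2 V) (x : V → Set.Icc (0:ℝ) 1),
        FF ht' hts f x = FF h hsym f x + t := by
      intro f x
      induction f using Sym2.ind with
      | _ i j => rfl
    have e3 : ∀ x : V → Set.Icc (0:ℝ) 1,
        ∏ f ∈ G.edgeFinset, (FF h hsym f x + t)
          = ∑ S ∈ G.edgeFinset.powerset,
              (∏ f ∈ S, FF h hsym f x) * t ^ (G.edgeFinset \ S).card := by
      intro x
      rw [Finset.prod_add]
      exact Finset.sum_congr rfl fun S _ => by rw [Finset.prod_const]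
    rw [e1]
    simp only [e2, e3]
    rw [integral_finset_sum _ (fun S _ => (integrable_prodFF hmeas hM S).mul_const _)]
    exact Finset.sum_congr rfl fun S _ => integral_mul_const _ _
  have hstep2 : ∏ f ∈ G.edgeFinset, tG G (H f) (hs f)
      = (∑ S ∈ G.edgeFinset.powerset, WInt h hsym S * t ^ (G.edgeFinset \ S).card)
        * WInt h hsym G.edgeFinset ^ (G.edgeFinset.card - 1) := by
    rw [← Finset.mul_prod_erase G.edgeFinset _ he, hstep2b,
      Finset.prod_congr rfl hstep2a, Finset.prod_const,
      Finset.card_erase_of_mem he]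
  rw [hstep1, hstep2] at hineq
  exact hineq
end

lemma key_eq {V : Type} [Fintype V] {h : ℝ → ℝ → ℝ} {hsym : ∀ a b, h a b = h b a} {M δ : ℝ}
    (G : SimpleGraph V)
    (hwn : ∀ (H : Sym2 V → ℝ → ℝ → ℝ) (hs : ∀ e a b, H e a b = H e b a),
      (∀ e, Measurable (Function.uncurry (H e))) → (∀ e, ∃ M, ∀ x y, |H e x y| ≤ M) →
      (∀ e x y, 0 ≤ H e x y) →
      tGm G H hs ^ G.edgeFinset.card ≤ ∏ e ∈ G.edgeFinset, tG G (H e) (hs e))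
    (hmeas : Measurable (Function.uncurry h)) (hM : ∀ x y, |h x y| ≤ M)
    (hδ : 0 < δ) (hsep : ∀ x y, δ ≤ h x y)
    (e : Sym2 V) (he : e ∈ G.edgeFinset) :
    (G.edgeFinset.card : ℝ) * WInt h hsym (G.edgeFinset.erase e)
      = ∑ f ∈ G.edgeFinset, WInt h hsym (G.edgeFinset.erase f) := by
  have hWnn : ∀ S : Finset (Sym2 V), 0 ≤ WInt h hsym S := WInt_nonneg hδ hsep
  have hk1 : 1 ≤ G.edgeFinset.card := Finset.card_pos.mpr ⟨e, he⟩
  have hApos : 0 < WInt h hsym G.edgeFinset :=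
    lt_of_lt_of_le (by positivity) (pow_le_WInt hδ hsep hmeas hM G.edgeFinset)
  have hAp : 0 < WInt h hsym G.edgeFinset ^ (G.edgeFinset.card - 1) := pow_pos hApos _
  have hC20 : 0 ≤ ∑ m ∈ Finset.range (G.edgeFinset.card + 1),
      (G.edgeFinset.card.choose m : ℝ) * WInt h hsym (G.edgeFinset.erase e) ^ m
        * WInt h hsym G.edgeFinset ^ (G.edgeFinset.card - m) :=
    Finset.sum_nonneg fun m _ => mul_nonneg (mul_nonneg (Nat.cast_nonneg _)
      (pow_nonneg (hWnn _) _)) (pow_nonneg (hWnn _) _)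
  have hCC0 : 0 ≤ ∑ S ∈ G.edgeFinset.powerset, WInt h hsym S :=
    Finset.sum_nonneg fun S _ => hWnn S
  have hsmall : ∀ t : ℝ, |t| ≤ min δ 1 →
      t * (((G.edgeFinset.card : ℝ) * WInt h hsym (G.edgeFinset.erase e)
            - ∑ f ∈ G.edgeFinset, WInt h hsym (G.edgeFinset.erase f))
          * WInt h hsym G.edgeFinset ^ (G.edgeFinset.card - 1))
        ≤ ((∑ m ∈ Finset.range (G.edgeFinset.card + 1), (G.edgeFinset.card.choose m : ℝ)
              * WInt h hsym (G.edgeFinset.erase e) ^ m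
              * WInt h hsym G.edgeFinset ^ (G.edgeFinset.card - m))
            + (∑ S ∈ G.edgeFinset.powerset, WInt h hsym S)
              * WInt h hsym G.edgeFinset ^ (G.edgeFinset.card - 1)) * t ^ 2 := by
    intro t htle
    have ht1 : |t| ≤ 1 := le_trans htle (min_le_right _ _)
    have htδ : -δ ≤ t := by
      have := (abs_le.mp (le_trans htle (min_le_left _ _))).1; linarith
    refine combine_step G.edgeFinset.card _ _
      (∑ S ∈ G.edgeFinset.powerset, WInt h hsym S * t ^ (G.edgeFinset \ S).card)
      _ _ _ t hAp.le ?_ ?_ ?_ ?_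
    · exact main_ineq G hwn hmeas hM hδ hsep e he t htδ
    · exact polybound G.edgeFinset (WInt h hsym) hWnn t ht1
    · exact binom_lower _ _ (hWnn _) (hWnn _) _ hk1 t ht1
    · rw [← pow_succ]; congr 1; omega
  have hzero := zero_of_small _ _ _ (lt_min hδ one_pos)
    (add_nonneg hC20 (mul_nonneg hCC0 hAp.le)) hsmall
  have h5 : (G.edgeFinset.card : ℝ) * WInt h hsym (G.edgeFinset.erase e)
      - ∑ f ∈ G.edgeFinset, WInt h hsym (G.edgeFinset.erase f) = 0 := by
    rcases mul_eq_zero.mp hzero with h' | h'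
    · exact h'
    · exact absurd h' (ne_of_gt hAp)
  linarith

/-- if `G` satisfies the weakly-norming (Hölder-type) inequality, then for every
kernel separated from zero, deleting any single edge yields the same density. -/
theorem deleted_densities_eq_of_separated {V : Type} [Fintype V] (G : SimpleGraph V)
    (hwn : ∀ (H : Sym2 V → ℝ → ℝ → ℝ) (hs : ∀ e a b, H e a b = H e b a),
      (∀ e, Measurable (Function.uncurry (H e))) → (∀ e, ∃ M, ∀ x y, |H e x y| ≤ M) →
      (∀ e x y, 0 ≤ H e x y) →
      tGm G H hs ^ G.edgeFinset.card ≤ ∏ e ∈ G.edgeFinset, tG G (H e) (hs e))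
    (h : ℝ → ℝ → ℝ) (hsym : ∀ a b, h a b = h b a)
    (hmeas : Measurable (Function.uncurry h)) (hbdd : ∃ M, ∀ x y, |h x y| ≤ M)
    (δ : ℝ) (hδ : 0 < δ) (hsep : ∀ x y, δ ≤ h x y) :
    ∀ e₁ ∈ G.edgeSet, ∀ e₂ ∈ G.edgeSet,
      tG (G.deleteEdges {e₁}) h hsym = tG (G.deleteEdges {e₂}) h hsym := by
  intro e₁ he₁ e₂ he₂
  obtain ⟨M, hM⟩ := hbdd
  have hm₁ : e₁ ∈ G.edgeFinset := SimpleGraph.mem_edgeFinset.mpr he₁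
  have hm₂ : e₂ ∈ G.edgeFinset := SimpleGraph.mem_edgeFinset.mpr he₂
  have k1 := key_eq (hsym := hsym) G hwn hmeas hM hδ hsep e₁ hm₁
  have k2 := key_eq (hsym := hsym) G hwn hmeas hM hδ hsep e₂ hm₂
  have hkpos : ((G.edgeFinset.card : ℝ)) ≠ 0 := by
    have : 0 < G.edgeFinset.card := Finset.card_pos.mpr ⟨e₁, hm₁⟩
    exact_mod_cast this.ne'
  have hBB : WInt h hsym (G.edgeFinset.erase e₁) = WInt h hsym (G.edgeFinset.erase e₂) :=
    mul_left_cancel₀ hkpos (k1.trans k2.symm)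
  have hE1 : (G.deleteEdges {e₁}).edgeFinset = G.edgeFinset.erase e₁ := by
    ext f; simp [SimpleGraph.edgeSet_deleteEdges, Finset.mem_erase, and_comm]
  have hE2 : (G.deleteEdges {e₂}).edgeFinset = G.edgeFinset.erase e₂ := by
    ext f; simp [SimpleGraph.edgeSet_deleteEdges, Finset.mem_erase, and_comm]
  have t1 : tG (G.deleteEdges {e₁}) h hsym = WInt h hsym ((G.deleteEdges {e₁}).edgeFinset) := by
    unfold tG WInt FF; congr 1; funext x; exact Finset.prod_congr (by ext; simp) (fun _ _ => rfl)
  have t2 : tG (G.deleteEdges {e₂}) h hsym = WInt h hsym ((G.deleteEdges {e₂}).edgeFinset) := by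
    unfold tG WInt FF; congr 1; funext x; exact Finset.prod_congr (by ext; simp) (fun _ _ => rfl)
  rw [t1, t2, hE1, hE2, hBB]
end

section
/- Suppose G is a finite graph with edges e_1,...,e_k such that t_G(h_1,...,h_k)^k ≤ ∏_{l=1}^k t_G(h_l) for all bounded measurable symmetric nonnegative h_1,...,h_k on [0,1]^2 (i.e., G is weakly norming in Hatami's sense). Then t_{G−e_1}(h) = t_{G−e_2}(h) = ... = t_{G−e_k}(h) for every bounded measurable symmetric nonnegative h on [0,1]^2. -/
open MeasureTheory Finset Filter
open scoped Classical

/-! ### Auxiliary real-number lemmas -/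

theorem my_pow_lb (x y : ℝ) (hx : 0 ≤ x) (hy : 0 ≤ y) (n : ℕ) :
    x^(n+1) + (n+1 : ℝ) * x^n * y ≤ (x+y)^(n+1) := by
  induction n with
  | zero => norm_num
  | succ n ih =>
    have h2 : (x+y) * (x^(n+1) + (n+1 : ℝ) * x^n * y) ≤ (x+y) * (x+y)^(n+1) :=
      mul_le_mul_of_nonneg_left ih (add_nonneg hx hy)
    have h3 : (x+y) * (x+y)^(n+1) = (x+y)^(n+1+1) := by ring
    have hexp : (x+y) * (x^(n+1) + (n+1 : ℝ) * x^n * y)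
        = x^(n+1+1) + ((n:ℝ)+1+1) * x^(n+1) * y + ((n:ℝ)+1) * (x^n * (y*y)) := by ring
    have h4 : 0 ≤ ((n:ℝ)+1) * (x^n * (y*y)) := by positivity
    push_cast
    linarith [h2, h3.symm ▸ h2]

theorem my_le_of_forall_eps (a b c : ℝ) (hc : 0 ≤ c)
    (H : ∀ ε : ℝ, 0 < ε → ε ≤ 1 → a ≤ b + ε * c) : a ≤ b := by
  apply le_of_forall_pos_le_add
  intro η hη
  have hε : 0 < min 1 (η / (c+1)) := lt_min one_pos (by positivity)
  calc a ≤ b + (min 1 (η/(c+1))) * c := H _ hε (min_le_left _ _)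
    _ ≤ b + η := by
      have h1 : (min 1 (η/(c+1))) * c ≤ (η/(c+1)) * c :=
        mul_le_mul_of_nonneg_right (min_le_right _ _) hc
      have h2 : (η/(c+1)) * c ≤ η := by
        rw [div_mul_eq_mul_div]
        exact (div_le_iff₀ (by linarith)).2 (by nlinarith)
      linarith

theorem sum_prod_erase_le {ι : Type} [DecidableEq ι] (s : Finset ι) (a : ι → ℝ) (M : ℝ)
    (hM : 1 ≤ M) (ha0 : ∀ i ∈ s, 0 ≤ a i) (haM : ∀ i ∈ s, a i ≤ M) :
    ∑ f ∈ s, ∏ i ∈ s.erase f, a i ≤ s.card * M ^ s.card := by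
  calc ∑ f ∈ s, ∏ i ∈ s.erase f, a i ≤ ∑ f ∈ s, M ^ s.card := by
        apply Finset.sum_le_sum
        intro f hf
        calc ∏ i ∈ s.erase f, a i ≤ ∏ i ∈ s.erase f, M :=
              Finset.prod_le_prod (fun i hi => ha0 i (Finset.mem_of_mem_erase hi))
                (fun i hi => haM i (Finset.mem_of_mem_erase hi))
          _ = M ^ (s.erase f).card := by rw [Finset.prod_const]
          _ ≤ M ^ s.card := pow_le_pow_right₀ (by linarith)
              (Finset.card_le_card (Finset.erase_subset _ _))
    _ = s.card * M ^ s.card := by rw [Finset.sum_const, nsmul_eq_mul]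

theorem prod_add_ub {ι : Type} [DecidableEq ι] (s : Finset ι) (a : ι → ℝ) (M δ : ℝ)
    (hM : 1 ≤ M) (ha0 : ∀ i ∈ s, 0 ≤ a i) (haM : ∀ i ∈ s, a i ≤ M)
    (hδ0 : 0 ≤ δ) (hδ1 : δ ≤ 1) :
    ∏ i ∈ s, (a i + δ) ≤
      ∏ i ∈ s, a i + δ * ∑ f ∈ s, ∏ i ∈ s.erase f, a i + δ^2 * (3*M)^s.card := by
  induction s using Finset.induction_on with
  | empty => simp; positivity
  | insert _ _ hnotmem _ =>
    rename_i j s ih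
    have ha0' : ∀ i ∈ s, 0 ≤ a i := fun i hi => ha0 i (Finset.mem_insert_of_mem hi)
    have haM' : ∀ i ∈ s, a i ≤ M := fun i hi => haM i (Finset.mem_insert_of_mem hi)
    have haj0 : 0 ≤ a j := ha0 j (Finset.mem_insert_self _ _)
    have hajM : a j ≤ M := haM j (Finset.mem_insert_self _ _)
    have IH := ih ha0' haM'
    set A := ∏ i ∈ s, a i with hA
    set S := ∑ f ∈ s, ∏ i ∈ s.erase f, a i with hS
    set c : ℝ := (3*M)^s.card with hc
    have hA0 : 0 ≤ A := Finset.prod_nonneg ha0'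
    have hS0 : 0 ≤ S := Finset.sum_nonneg fun f hf =>
      Finset.prod_nonneg fun i hi => ha0' i (Finset.mem_of_mem_erase hi)
    have hSle : S ≤ s.card * M ^ s.card := sum_prod_erase_le s a M hM ha0' haM'
    have hcard : (s.card : ℝ) * M ^ s.card ≤ c := by
      rw [hc, mul_pow]
      apply mul_le_mul _ le_rfl (by positivity) (by positivity)
      calc (s.card : ℝ) ≤ 2 ^ s.card := by exact_mod_cast Nat.le_of_lt (Nat.lt_two_pow_self)
        _ ≤ 3 ^ s.card := by
          apply pow_le_pow_left₀ (by norm_num) (by norm_num)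
    have hc1 : (1:ℝ) ≤ c := by
      rw [hc]; apply one_le_pow₀; linarith
    have hsum : ∑ f ∈ insert j s, ∏ i ∈ (insert j s).erase f, a i = A + a j * S := by
      rw [Finset.sum_insert hnotmem, Finset.erase_insert hnotmem, ← hA]
      congr 1
      rw [hS, Finset.mul_sum]
      apply Finset.sum_congr rfl
      intro f hf
      have hjf : j ≠ f := fun hh => hnotmem (hh ▸ hf)
      rw [Finset.erase_insert_of_ne hjf,
        Finset.prod_insert (fun hmem => hnotmem (Finset.mem_of_mem_erase hmem))]
    have hprodins : ∏ i ∈ insert j s, a i = a j * A := by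
      rw [Finset.prod_insert hnotmem]
    have hcardins : (insert j s).card = s.card + 1 := Finset.card_insert_of_notMem hnotmem
    rw [Finset.prod_insert hnotmem, hsum, hprodins, hcardins]
    have hstep : (a j + δ) * ∏ i ∈ s, (a i + δ) ≤ (a j + δ) * (A + δ * S + δ^2 * c) :=
      mul_le_mul_of_nonneg_left IH (by linarith)
    have hfin : (a j + δ) * (A + δ * S + δ^2 * c) ≤
        a j * A + δ * (A + a j * S) + δ^2 * (3*M)^(s.card+1) := by
      have h1 : (3*M)^(s.card+1) = 3*M*c := by rw [hc]; ring
      rw [h1]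
      have e1 : (a j + δ) * (A + δ * S + δ^2 * c)
          = a j * A + δ * (A + a j * S) + δ^2 * (a j * c + S + δ * c) := by ring
      rw [e1]
      have hfits : a j * c + S + δ * c ≤ 3*M*c := by
        have h2 : a j * c ≤ M * c := mul_le_mul_of_nonneg_right hajM (by linarith)
        have h3 : S ≤ c := le_trans hSle hcard
        have h4 : δ * c ≤ c := by nlinarith
        have h5 : c ≤ M * c := by nlinarith
        linarith
      nlinarith [sq_nonneg δ]
    linarith

/-! ### The kernel lift and truncated densities -/

noncomputable def elift {V : Type} (g : ℝ → ℝ → ℝ) (hg : ∀ a b, g a b = g b a)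
    (x : V → Set.Icc (0:ℝ) 1) (e : Sym2 V) : ℝ :=
  Sym2.lift ⟨fun i j => g (x i) (x j), fun _ _ => hg _ _⟩ e

theorem elift_nonneg {V : Type} (g : ℝ → ℝ → ℝ) (hg : ∀ a b, g a b = g b a)
    (x : V → Set.Icc (0:ℝ) 1) (e : Sym2 V) (h0 : ∀ a b, 0 ≤ g a b) : 0 ≤ elift g hg x e := by
  induction e using Sym2.ind with
  | _ i j => simpa [elift] using h0 _ _

theorem elift_le {V : Type} (g : ℝ → ℝ → ℝ) (hg : ∀ a b, g a b = g b a)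
    (x : V → Set.Icc (0:ℝ) 1) (e : Sym2 V) (M : ℝ) (hle : ∀ a b, g a b ≤ M) :
    elift g hg x e ≤ M := by
  induction e using Sym2.ind with
  | _ i j => simpa [elift] using hle _ _

theorem elift_ge {V : Type} (g : ℝ → ℝ → ℝ) (hg : ∀ a b, g a b = g b a)
    (x : V → Set.Icc (0:ℝ) 1) (e : Sym2 V) (δ : ℝ) (hle : ∀ a b, δ ≤ g a b) :
    δ ≤ elift g hg x e := by
  induction e using Sym2.ind with
  | _ i j => simpa [elift] using hle _ _

theorem elift_abs_le {V : Type} (g : ℝ → ℝ → ℝ) (hg : ∀ a b, g a b = g b a)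
    (x : V → Set.Icc (0:ℝ) 1) (e : Sym2 V) (M : ℝ) (h0 : ∀ a b, |g a b| ≤ M) :
    |elift g hg x e| ≤ M := by
  induction e using Sym2.ind with
  | _ i j => simpa [elift] using h0 _ _

theorem elift_add_const {V : Type} (c : ℝ) (g : ℝ → ℝ → ℝ) (hg : ∀ a b, g a b = g b a)
    (hg' : ∀ a b, g a b + c = g b a + c) (x : V → Set.Icc (0:ℝ) 1) (e : Sym2 V) :
    elift (fun a b => g a b + c) hg' x e = elift g hg x e + c := by
  induction e using Sym2.ind with
  | _ i j => simp [elift]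

theorem elift_congr {V : Type} (g₁ g₂ : ℝ → ℝ → ℝ) (hg₁ : ∀ a b, g₁ a b = g₁ b a)
    (hg₂ : ∀ a b, g₂ a b = g₂ b a) (hgg : g₁ = g₂) (x : V → Set.Icc (0:ℝ) 1)
    (e : Sym2 V) : elift g₁ hg₁ x e = elift g₂ hg₂ x e := by subst hgg; rfl

theorem measurable_prod_elift {V : Type} [Fintype V] (s : Finset (Sym2 V)) (g : ℝ → ℝ → ℝ)
    (hg : ∀ a b, g a b = g b a) (hm : Measurable (Function.uncurry g)) :
    Measurable (fun x : V → Set.Icc (0:ℝ) 1 => ∏ e ∈ s, elift g hg x e) := by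
  apply Finset.measurable_prod
  intro e _
  induction e using Sym2.ind with
  | _ i j =>
    simp only [elift, Sym2.lift_mk]
    exact hm.comp ((measurable_subtype_coe.comp (measurable_pi_apply i)).prodMk
      (measurable_subtype_coe.comp (measurable_pi_apply j)))

theorem integrable_prod_elift {V : Type} [Fintype V] (s : Finset (Sym2 V)) (g : ℝ → ℝ → ℝ)
    (hg : ∀ a b, g a b = g b a) (hm : Measurable (Function.uncurry g)) (M : ℝ)
    (hbd : ∀ a b, |g a b| ≤ M) :
    Integrable (fun x : V → Set.Icc (0:ℝ) 1 => ∏ e ∈ s, elift g hg x e) := by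
  apply Integrable.mono' (integrable_const (M ^ s.card))
    (measurable_prod_elift s g hg hm).aestronglyMeasurable
  filter_upwards with x
  calc ‖∏ e ∈ s, elift g hg x e‖ ≤ ∏ e ∈ s, |elift g hg x e| := by
        rw [Real.norm_eq_abs, Finset.abs_prod]
    _ ≤ ∏ e ∈ s, M := Finset.prod_le_prod (fun _ _ => abs_nonneg _)
        (fun e _ => elift_abs_le g hg x e M hbd)
    _ = M ^ s.card := by rw [Finset.prod_const]

noncomputable def T {V : Type} [Fintype V] (s : Finset (Sym2 V)) (g : ℝ → ℝ → ℝ)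
    (hg : ∀ a b, g a b = g b a) : ℝ :=
  ∫ x : V → Set.Icc (0:ℝ) 1, ∏ e ∈ s, elift g hg x e

theorem T_congr {V : Type} [Fintype V] (s : Finset (Sym2 V)) (g₁ g₂ : ℝ → ℝ → ℝ)
    (hg₁ : ∀ a b, g₁ a b = g₁ b a) (hg₂ : ∀ a b, g₂ a b = g₂ b a) (hgg : g₁ = g₂) :
    T s g₁ hg₁ = T s g₂ hg₂ := by subst hgg; rfl

theorem T_nonneg {V : Type} [Fintype V] (s : Finset (Sym2 V)) (g : ℝ → ℝ → ℝ)
    (hg : ∀ a b, g a b = g b a) (h0 : ∀ a b, 0 ≤ g a b) : 0 ≤ T s g hg :=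
  integral_nonneg fun x => Finset.prod_nonneg fun e _ => elift_nonneg g hg x e h0

theorem tG_eq_T {V : Type} [Fintype V] (G : SimpleGraph V) (h : ℝ → ℝ → ℝ)
    (hsym : ∀ a b, h a b = h b a) : tG G h hsym = T G.edgeFinset h hsym := rfl

theorem tGm_eq {V : Type} [Fintype V] (G : SimpleGraph V) (H : Sym2 V → ℝ → ℝ → ℝ)
    (hs : ∀ e a b, H e a b = H e b a) :
    tGm G H hs = ∫ x : V → Set.Icc (0:ℝ) 1,
      ∏ e ∈ G.edgeFinset, elift (H e) (hs e) x e := rfl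

theorem edgeFinset_deleteEdges {V : Type} [Fintype V] (G : SimpleGraph V) (e : Sym2 V) :
    (G.deleteEdges {e}).edgeFinset = G.edgeFinset.erase e := by
  ext f
  simp [SimpleGraph.mem_edgeFinset, SimpleGraph.edgeSet_deleteEdges, Finset.mem_erase,
    and_comm]

/-- The key step: for a kernel `g` bounded below by `δ > 0`, the weak norming inequality
forces `k * T(s \ e) ≤ ∑_f T(s \ f)`. -/
theorem key_step {V : Type} [Fintype V] (G : SimpleGraph V)
    (hwn : ∀ (H : Sym2 V → ℝ → ℝ → ℝ) (hs : ∀ e a b, H e a b = H e b a),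
      (∀ e, Measurable (Function.uncurry (H e))) → (∀ e, ∃ M, ∀ x y, |H e x y| ≤ M) →
      (∀ e x y, 0 ≤ H e x y) →
      tGm G H hs ^ G.edgeFinset.card ≤ ∏ e ∈ G.edgeFinset, tG G (H e) (hs e))
    (g : ℝ → ℝ → ℝ) (hgsym : ∀ a b, g a b = g b a)
    (hgmeas : Measurable (Function.uncurry g)) (M : ℝ) (hM1 : 1 ≤ M)
    (hg0 : ∀ a b, 0 ≤ g a b) (hgM : ∀ a b, g a b ≤ M)
    (δ : ℝ) (hδ : 0 < δ) (hδlow : ∀ a b, δ ≤ g a b)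
    (e : Sym2 V) (he : e ∈ G.edgeFinset) :
    (G.edgeFinset.card : ℝ) * T (G.edgeFinset.erase e) g hgsym ≤
      ∑ f ∈ G.edgeFinset, T (G.edgeFinset.erase f) g hgsym := by
  set s := G.edgeFinset with hs_def
  set k := s.card with hk_def
  have hgabs : ∀ a b, |g a b| ≤ M := fun a b => abs_le.2 ⟨by linarith [hg0 a b], hgM a b⟩
  set A := T s g hgsym with hA_def
  set Be := T (s.erase e) g hgsym with hBe_def
  set B := ∑ f ∈ s, T (s.erase f) g hgsym with hB_def
  set C : ℝ := (3*M)^k with hC_def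
  have hC0 : (0:ℝ) ≤ C := by positivity
  -- positivity of A
  have hApos : 0 < A := by
    have hint := integrable_prod_elift s g hgsym hgmeas M hgabs
    have hlow : ∀ x : V → Set.Icc (0:ℝ) 1, δ^k ≤ ∏ f ∈ s, elift g hgsym x f := by
      intro x
      calc δ^k = ∏ f ∈ s, δ := by rw [Finset.prod_const]
        _ ≤ ∏ f ∈ s, elift g hgsym x f := Finset.prod_le_prod (fun _ _ => le_of_lt hδ)
            (fun f _ => elift_ge g hgsym x f δ hδlow)
    have : δ^k ≤ A := by
      have := integral_mono (integrable_const (δ^k)) hint hlow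
      simpa [hA_def, T] using this
    have : (0:ℝ) < δ^k := pow_pos hδ k
    linarith [‹δ^k ≤ A›]
  have hBe0 : 0 ≤ Be := T_nonneg _ g hgsym hg0
  have hBnn : 0 ≤ B := Finset.sum_nonneg fun f _ => T_nonneg _ g hgsym hg0
  -- k = n + 1
  have hkpos : 0 < k := Finset.card_pos.2 ⟨e, he⟩
  obtain ⟨n, hn⟩ : ∃ n, k = n + 1 := ⟨k - 1, (Nat.succ_pred_eq_of_pos hkpos).symm⟩
  have hApow : (0:ℝ) < A^n := pow_pos hApos n
  -- main ε-inequality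
  have main : ∀ ε : ℝ, 0 < ε → ε ≤ 1 →
      (k:ℝ) * Be * A^n ≤ B * A^n + ε * (C * A^n) := by
    intro ε hε hε1
    set gε : ℝ → ℝ → ℝ := fun a b => g a b + ε with hgε_def
    have hgεsym : ∀ a b, gε a b = gε b a := fun a b => by simp [hgε_def, hgsym a b]
    have hgεmeas : Measurable (Function.uncurry gε) := by
      have : Function.uncurry gε = fun p : ℝ × ℝ => Function.uncurry g p + ε := rfl
      rw [this]; exact hgmeas.add_const ε
    have hgε0 : ∀ a b, 0 ≤ gε a b := fun a b => by
      have := hg0 a b; simp [hgε_def]; linarith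
    have hgεabs : ∀ a b, |gε a b| ≤ M + 1 := fun a b => by
      have h1 := hg0 a b; have h2 := hgM a b
      rw [abs_le]; constructor <;> simp [hgε_def] <;> linarith
    set H : Sym2 V → ℝ → ℝ → ℝ := fun f => if f = e then gε else g with hH_def
    have hsH : ∀ f a b, H f a b = H f b a := by
      intro f a b
      by_cases hfe : f = e <;> simp [hH_def, hfe, hgsym a b, hgεsym a b]
    have hHe : H e = gε := by simp [hH_def]
    have hHf : ∀ f, f ≠ e → H f = g := fun f hf => by simp [hH_def, hf]
    have hmH : ∀ f, Measurable (Function.uncurry (H f)) := by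
      intro f
      by_cases hfe : f = e
      · rw [hfe, hHe]; exact hgεmeas
      · rw [hHf f hfe]; exact hgmeas
    have hbH : ∀ f, ∃ Mf, ∀ x y, |H f x y| ≤ Mf := by
      intro f
      by_cases hfe : f = e
      · exact ⟨M + 1, by rw [hfe, hHe]; exact hgεabs⟩
      · exact ⟨M, by rw [hHf f hfe]; exact hgabs⟩
    have hnnH : ∀ f x y, 0 ≤ H f x y := by
      intro f x y
      by_cases hfe : f = e
      · rw [hfe, hHe]; exact hgε0 x y
      · rw [hHf f hfe]; exact hg0 x y
    have key := hwn H hsH hmH hbH hnnH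
    -- LHS : tGm G H hsH = A + ε * Be
    have hLHS : tGm G H hsH = A + ε * Be := by
      rw [tGm_eq]
      have hpt : ∀ x : V → Set.Icc (0:ℝ) 1,
          ∏ f ∈ s, elift (H f) (hsH f) x f
            = ∏ f ∈ s, elift g hgsym x f + ε * ∏ f ∈ s.erase e, elift g hgsym x f := by
        intro x
        rw [← Finset.mul_prod_erase s (fun f => elift (H f) (hsH f) x f) he,
          ← Finset.mul_prod_erase s (fun f => elift g hgsym x f) he]
        have h1 : elift (H e) (hsH e) x e = elift g hgsym x e + ε := by
          rw [elift_congr (H e) gε (hsH e) hgεsym hHe x e]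
          exact elift_add_const ε g hgsym hgεsym x e
        have h2 : ∏ f ∈ s.erase e, elift (H f) (hsH f) x f
            = ∏ f ∈ s.erase e, elift g hgsym x f :=
          Finset.prod_congr rfl fun f hf =>
            elift_congr (H f) g (hsH f) hgsym (hHf f (Finset.ne_of_mem_erase hf)) x f
        rw [h1, h2]; ring
      rw [integral_congr_ae (Filter.Eventually.of_forall hpt)]
      have hiBe : Integrable (fun x : V → Set.Icc (0:ℝ) 1 =>
          ε * ∏ f ∈ s.erase e, elift g hgsym x f) :=
        (integrable_prod_elift (s.erase e) g hgsym hgmeas M hgabs).const_mul ε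
      rw [integral_add (integrable_prod_elift s g hgsym hgmeas M hgabs) hiBe,
        integral_const_mul]
      rfl
    -- RHS : ∏ = T s gε * A ^ n
    have hRHS : ∏ f ∈ s, tG G (H f) (hsH f) = T s gε hgεsym * A ^ n := by
      rw [← Finset.mul_prod_erase s (fun f => tG G (H f) (hsH f)) he]
      congr 1
      · rw [tG_eq_T]; exact T_congr _ _ _ _ _ hHe
      · have h2 : ∀ f ∈ s.erase e, tG G (H f) (hsH f) = A := by
          intro f hf
          rw [tG_eq_T]
          exact T_congr _ _ _ _ _ (hHf f (Finset.ne_of_mem_erase hf))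
        rw [Finset.prod_congr rfl h2, Finset.prod_const, Finset.card_erase_of_mem he]
        congr 1
        omega
    -- upper bound for T s gε
    have hTgε : T s gε hgεsym ≤ A + ε * B + ε^2 * C := by
      have hint1 := integrable_prod_elift s g hgsym hgmeas M hgabs
      have hintsum : Integrable (fun x : V → Set.Icc (0:ℝ) 1 =>
          ∑ f ∈ s, ∏ i ∈ s.erase f, elift g hgsym x i) :=
        integrable_finset_sum s fun f _ =>
          integrable_prod_elift (s.erase f) g hgsym hgmeas M hgabs
      have hptle : ∀ x : V → Set.Icc (0:ℝ) 1,
          ∏ f ∈ s, elift gε hgεsym x f ≤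
            ∏ f ∈ s, elift g hgsym x f
              + ε * ∑ f ∈ s, ∏ i ∈ s.erase f, elift g hgsym x i + ε^2 * C := by
        intro x
        have h1 : ∀ f ∈ s, elift gε hgεsym x f = elift g hgsym x f + ε := fun f _ =>
          elift_add_const ε g hgsym hgεsym x f
        rw [Finset.prod_congr rfl h1]
        exact prod_add_ub s (fun f => elift g hgsym x f) M ε hM1
          (fun f _ => elift_nonneg g hgsym x f hg0)
          (fun f _ => elift_le g hgsym x f M hgM) (le_of_lt hε) hε1
      have hiS : Integrable (fun x : V → Set.Icc (0:ℝ) 1 =>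
          ε * ∑ f ∈ s, ∏ i ∈ s.erase f, elift g hgsym x i) := hintsum.const_mul ε
      have hi1S : Integrable (fun x : V → Set.Icc (0:ℝ) 1 =>
          ∏ f ∈ s, elift g hgsym x f
            + ε * ∑ f ∈ s, ∏ i ∈ s.erase f, elift g hgsym x i) := hint1.add hiS
      have hint2 : Integrable (fun x : V → Set.Icc (0:ℝ) 1 =>
          ∏ f ∈ s, elift g hgsym x f
            + ε * ∑ f ∈ s, ∏ i ∈ s.erase f, elift g hgsym x i + ε^2 * C) :=
        hi1S.add (integrable_const _)
      have hintε := integrable_prod_elift s gε hgεsym hgεmeas (M+1) hgεabs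
      have := integral_mono hintε hint2 hptle
      calc T s gε hgεsym ≤ ∫ x : V → Set.Icc (0:ℝ) 1,
            (∏ f ∈ s, elift g hgsym x f
              + ε * ∑ f ∈ s, ∏ i ∈ s.erase f, elift g hgsym x i + ε^2 * C) := this
        _ = A + ε * B + ε^2 * C := by
          rw [integral_add hi1S (integrable_const _),
            integral_add hint1 hiS, integral_const_mul,
            integral_finset_sum s (fun f _ =>
              integrable_prod_elift (s.erase f) g hgsym hgmeas M hgabs),
            integral_const]
          simp [hA_def, hB_def, T]
    -- binomial lower bound
    have hbin : A^(n+1) + (n+1:ℝ) * A^n * (ε * Be) ≤ (A + ε * Be)^(n+1) :=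
      my_pow_lb A (ε * Be) (le_of_lt hApos) (mul_nonneg (le_of_lt hε) hBe0) n
    have hchain : (A + ε * Be)^(n+1) ≤ (A + ε * B + ε^2 * C) * A^n := by
      calc (A + ε * Be)^(n+1) = tGm G H hsH ^ k := by rw [hLHS, hn]
        _ ≤ ∏ f ∈ s, tG G (H f) (hsH f) := key
        _ = T s gε hgεsym * A^n := hRHS
        _ ≤ (A + ε * B + ε^2 * C) * A^n :=
          mul_le_mul_of_nonneg_right hTgε (le_of_lt hApow)
    have hexpand : (A + ε * B + ε^2 * C) * A^n = A^(n+1) + (ε * B + ε^2 * C) * A^n := by ring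
    have hstep2 : (n+1:ℝ) * A^n * (ε * Be) ≤ (ε * B + ε^2 * C) * A^n := by
      rw [hexpand] at hchain
      linarith
    have hkn : (k:ℝ) = (n:ℝ) + 1 := by rw [hn]; push_cast; ring
    -- divide by ε
    rw [hkn]
    have : ε * ((n+1:ℝ) * Be * A^n) ≤ ε * (B * A^n + ε * (C * A^n)) := by
      nlinarith [hstep2]
    have := (mul_le_mul_iff_right₀ hε).mp this
    linarith
  have hfinal : (k:ℝ) * Be * A^n ≤ B * A^n :=
    my_le_of_forall_eps _ _ _ (mul_nonneg hC0 (le_of_lt hApow)) main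
  have := (mul_le_mul_iff_left₀ hApow).mp hfinal
  linarith

/-- Perturbation bounds: `T s' h ≤ T s' (h+δ) ≤ T s' h + δ·C`. -/
theorem T_perturb {V : Type} [Fintype V] (s' : Finset (Sym2 V)) (h : ℝ → ℝ → ℝ)
    (hsym : ∀ a b, h a b = h b a) (hδsym : ∀ a b, h a b + δ' = h b a + δ')
    (hmeas : Measurable (Function.uncurry h)) (M : ℝ) (hM1 : 1 ≤ M)
    (h0 : ∀ a b, 0 ≤ h a b) (hMub : ∀ a b, h a b ≤ M)
    (hδ0 : 0 < δ') (hδ1 : δ' ≤ 1) :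
    T s' h hsym ≤ T s' (fun a b => h a b + δ') hδsym ∧
      T s' (fun a b => h a b + δ') hδsym ≤
        T s' h hsym + δ' * ((s'.card : ℝ) * M ^ s'.card + (3*M) ^ s'.card) := by
  have habs : ∀ a b, |h a b| ≤ M := fun a b => abs_le.2 ⟨by linarith [h0 a b], hMub a b⟩
  have hδmeas : Measurable (Function.uncurry (fun a b => h a b + δ')) := by
    have : Function.uncurry (fun a b => h a b + δ')
        = fun p : ℝ × ℝ => Function.uncurry h p + δ' := rfl
    rw [this]; exact hmeas.add_const δ'
  have hδabs : ∀ a b, |h a b + δ'| ≤ M + 1 := fun a b => by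
    have := h0 a b; have := hMub a b
    rw [abs_le]; constructor <;> linarith
  have hint := integrable_prod_elift s' h hsym hmeas M habs
  have hintδ := integrable_prod_elift s' (fun a b => h a b + δ') hδsym hδmeas (M+1) hδabs
  have hptδ : ∀ x : V → Set.Icc (0:ℝ) 1,
      ∏ f ∈ s', elift (fun a b => h a b + δ') hδsym x f
        = ∏ f ∈ s', (elift h hsym x f + δ') :=
    fun x => Finset.prod_congr rfl fun f _ => elift_add_const δ' h hsym hδsym x f
  constructor
  · apply integral_mono hint hintδ
    intro x
    show ∏ f ∈ s', elift h hsym x f ≤ ∏ f ∈ s', elift (fun a b => h a b + δ') hδsym x f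
    rw [hptδ x]
    exact Finset.prod_le_prod (fun f _ => elift_nonneg h hsym x f h0)
      (fun f _ => by linarith [le_refl (elift h hsym x f)])
  · have hub : ∀ x : V → Set.Icc (0:ℝ) 1,
        ∏ f ∈ s', elift (fun a b => h a b + δ') hδsym x f ≤
          ∏ f ∈ s', elift h hsym x f
            + δ' * ((s'.card : ℝ) * M ^ s'.card + (3*M) ^ s'.card) := by
      intro x
      rw [hptδ x]
      have hb := prod_add_ub s' (fun f => elift h hsym x f) M δ' hM1
        (fun f _ => elift_nonneg h hsym x f h0) (fun f _ => elift_le h hsym x f M hMub)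
        (le_of_lt hδ0) hδ1
      have hsle := sum_prod_erase_le s' (fun f => elift h hsym x f) M hM1
        (fun f _ => elift_nonneg h hsym x f h0) (fun f _ => elift_le h hsym x f M hMub)
      have hC0 : (0:ℝ) ≤ (3*M)^s'.card := by positivity
      have hm1 : δ' * ∑ f ∈ s', ∏ i ∈ s'.erase f, elift h hsym x i
          ≤ δ' * ((s'.card : ℝ) * M ^ s'.card) :=
        mul_le_mul_of_nonneg_left hsle (le_of_lt hδ0)
      have hsq : δ'^2 ≤ δ' := by nlinarith
      have hm2 : δ'^2 * (3*M)^s'.card ≤ δ' * (3*M)^s'.card :=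
        mul_le_mul_of_nonneg_right hsq hC0
      linarith
    have hintrhs : Integrable (fun x : V → Set.Icc (0:ℝ) 1 =>
        ∏ f ∈ s', elift h hsym x f
          + δ' * ((s'.card : ℝ) * M ^ s'.card + (3*M) ^ s'.card)) :=
      hint.add (integrable_const _)
    have := integral_mono hintδ hintrhs hub
    calc T s' (fun a b => h a b + δ') hδsym
        ≤ ∫ x : V → Set.Icc (0:ℝ) 1, (∏ f ∈ s', elift h hsym x f
            + δ' * ((s'.card : ℝ) * M ^ s'.card + (3*M) ^ s'.card)) := this
      _ = T s' h hsym + δ' * ((s'.card : ℝ) * M ^ s'.card + (3*M) ^ s'.card) := by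
          rw [integral_add hint (integrable_const _), integral_const]
          simp [T]

/-- key lemma: if `G` is weakly norming, then all single-edge deletions of `G`
give the same homomorphism density on every bounded measurable symmetric nonnegative kernel. -/
theorem deleted_densities_eq {V : Type} [Fintype V] (G : SimpleGraph V)
    (hwn : ∀ (H : Sym2 V → ℝ → ℝ → ℝ) (hs : ∀ e a b, H e a b = H e b a),
      (∀ e, Measurable (Function.uncurry (H e))) → (∀ e, ∃ M, ∀ x y, |H e x y| ≤ M) →
      (∀ e x y, 0 ≤ H e x y) →
      tGm G H hs ^ G.edgeFinset.card ≤ ∏ e ∈ G.edgeFinset, tG G (H e) (hs e))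
    (h : ℝ → ℝ → ℝ) (hsym : ∀ a b, h a b = h b a)
    (hmeas : Measurable (Function.uncurry h)) (hbdd : ∃ M, ∀ x y, |h x y| ≤ M)
    (hnonneg : ∀ x y, 0 ≤ h x y) :
    ∀ e₁ ∈ G.edgeSet, ∀ e₂ ∈ G.edgeSet,
      tG (G.deleteEdges {e₁}) h hsym = tG (G.deleteEdges {e₂}) h hsym := by
  intro e₁ he₁ e₂ he₂
  obtain ⟨M₀, hM₀⟩ := hbdd
  set M : ℝ := max M₀ 1 with hM_def
  have hM1 : 1 ≤ M := le_max_right _ _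
  have habs : ∀ a b, |h a b| ≤ M := fun a b => le_trans (hM₀ a b) (le_max_left _ _)
  have hMub : ∀ a b, h a b ≤ M := fun a b => (abs_le.1 (habs a b)).2
  set s := G.edgeFinset with hs_def
  have he₁s : e₁ ∈ s := SimpleGraph.mem_edgeFinset.2 he₁
  have he₂s : e₂ ∈ s := SimpleGraph.mem_edgeFinset.2 he₂
  set k := s.card with hk_def
  have hkpos : 0 < k := Finset.card_pos.2 ⟨e₁, he₁s⟩
  -- rewrite goal in terms of T
  rw [tG_eq_T, tG_eq_T]
  suffices H : T (s.erase e₁) h hsym = T (s.erase e₂) h hsym by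
    convert H using 2 <;> ext f <;> simp [SimpleGraph.mem_edgeFinset, SimpleGraph.edgeSet_deleteEdges, Finset.mem_erase, and_comm, hs_def]
  -- equality for the perturbed kernels
  have hδsym : ∀ δ' : ℝ, ∀ a b, h a b + δ' = h b a + δ' := fun δ' a b => by rw [hsym a b]
  have hperteq : ∀ δ' : ℝ, 0 < δ' → δ' ≤ 1 →
      T (s.erase e₁) (fun a b => h a b + δ') (hδsym δ')
        = T (s.erase e₂) (fun a b => h a b + δ') (hδsym δ') := by
    intro δ' hδ0 hδ1
    set g : ℝ → ℝ → ℝ := fun a b => h a b + δ' with hg_def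
    have hgsym := hδsym δ'
    have hgmeas : Measurable (Function.uncurry g) := by
      have : Function.uncurry g = fun p : ℝ × ℝ => Function.uncurry h p + δ' := rfl
      rw [this]; exact hmeas.add_const δ'
    have hg0 : ∀ a b, 0 ≤ g a b := fun a b => by
      have := hnonneg a b; simp only [hg_def]; linarith
    have hgM : ∀ a b, g a b ≤ M + 1 := fun a b => by
      have := hMub a b; simp only [hg_def]; linarith
    have hglow : ∀ a b, δ' ≤ g a b := fun a b => by
      have := hnonneg a b; simp only [hg_def]; linarith
    have hstep : ∀ e ∈ s, (k:ℝ) * T (s.erase e) g hgsym ≤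
        ∑ f ∈ s, T (s.erase f) g hgsym :=
      fun e he => key_step G hwn g hgsym hgmeas (M+1) (by linarith) hg0 hgM δ' hδ0 hglow e he
    have hsum0 : ∑ e ∈ s, ((∑ f ∈ s, T (s.erase f) g hgsym)
        - (k:ℝ) * T (s.erase e) g hgsym) = 0 := by
      rw [Finset.sum_sub_distrib, Finset.sum_const, ← Finset.mul_sum, nsmul_eq_mul]
      ring
    have hall := (Finset.sum_eq_zero_iff_of_nonneg
      (fun e hee => sub_nonneg.2 (hstep e hee))).1 hsum0
    have h1 := hall e₁ he₁s
    have h2 := hall e₂ he₂s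
    have hkne : (k:ℝ) ≠ 0 := ne_of_gt (Nat.cast_pos.2 hkpos)
    have : (k:ℝ) * T (s.erase e₁) g hgsym = (k:ℝ) * T (s.erase e₂) g hgsym := by
      linarith [sub_eq_zero.1 h1, sub_eq_zero.1 h2]
    exact mul_left_cancel₀ hkne this
  -- pass to the limit δ' → 0
  have hC : ∀ e : Sym2 V, (0:ℝ) ≤ ((s.erase e).card : ℝ) * M ^ (s.erase e).card
      + (3*M) ^ (s.erase e).card := fun e => by positivity
  have hle : ∀ (ea eb : Sym2 V), ea ∈ s → eb ∈ s →
      (∀ δ' : ℝ, 0 < δ' → δ' ≤ 1 →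
        T (s.erase ea) (fun a b => h a b + δ') (hδsym δ')
          = T (s.erase eb) (fun a b => h a b + δ') (hδsym δ')) →
      T (s.erase ea) h hsym ≤ T (s.erase eb) h hsym := by
    intro ea eb _ _ heq
    apply my_le_of_forall_eps _ _ (((s.erase eb).card : ℝ) * M ^ (s.erase eb).card
      + (3*M) ^ (s.erase eb).card) (hC eb)
    intro δ' hδ0 hδ1
    have hpa := T_perturb (s.erase ea) h hsym (hδsym δ') hmeas M hM1 hnonneg hMub hδ0 hδ1
    have hpb := T_perturb (s.erase eb) h hsym (hδsym δ') hmeas M hM1 hnonneg hMub hδ0 hδ1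
    calc T (s.erase ea) h hsym
        ≤ T (s.erase ea) (fun a b => h a b + δ') (hδsym δ') := hpa.1
      _ = T (s.erase eb) (fun a b => h a b + δ') (hδsym δ') := heq δ' hδ0 hδ1
      _ ≤ T (s.erase eb) h hsym + δ' * (((s.erase eb).card : ℝ) * M ^ (s.erase eb).card
          + (3*M) ^ (s.erase eb).card) := hpb.2
  exact le_antisymm (hle e₁ e₂ he₁s he₂s hperteq)
    (hle e₂ e₁ he₂s he₁s (fun δ' a b => (hperteq δ' a b).symm))
end
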